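/- Let f : X → ℂ be measurable with ∫_X ω^{−1}|f|² dμ < ∞, let z ∈ ℂ with Im z ≠ 0, let E ≥ 0, and let ω_e, λ ∈ ℝ. Then the function k ↦ |f(k)|²/(ω(k) + E − z) is μ-integrable, and |ω_e + E − z − λ² ∫_X |f(k)|²/(ω(k) + E − z) dμ(k)| ≥ |Im z|. (This fiber-wise lower bound is the key estimate showing that the propagator G_{f,ω_e}(z) = ω_e − z + dΓ(ω) − λ²S_f(z) of the rotating-wave spin–boson model has a bounded inverse for non-real z.) -/

import Mathlib

open MeasureTheory ENNReal

/-- For `f ∈ H_{−1}`, non-real `z`, `E ≥ 0` and real `ω_e, λ`: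
`k ↦ |f(k)|²/(ω(k)+E−z)` is integrable and
`|ω_e + E − z − λ² ∫ |f|²/(ω+E−z) dμ| ≥ |Im z|` (the fiber-wise lower bound on the
propagator `G_{f,ω_e}(z)` of the rotating-wave spin–boson model). -/
theorem propagator_lower_bound
    {X : Type*} [MeasurableSpace X] (μ : Measure X)
    (ω : X → ℝ) (hω : Measurable ω) (m : ℝ) (hm : 0 < m) (hωm : ∀ k, m ≤ ω k)
    (f : X → ℂ) (hf : Measurable f)
    (hf1 : (∫⁻ k, ENNReal.ofReal (ω k ^ (-1 : ℝ) * ‖f k‖ ^ 2) ∂μ) ≠ ⊤)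
    (z : ℂ) (hz : z.im ≠ 0) (E : ℝ) (hE : 0 ≤ E) (ωe lam : ℝ) :
    Integrable (fun k => (‖f k‖ ^ 2 : ℂ) / ((ω k : ℂ) + (E : ℂ) - z)) μ ∧
    |z.im| ≤
      ‖(ωe : ℂ) + (E : ℂ) - z -
        (lam ^ 2 : ℂ) * ∫ k, (‖f k‖ ^ 2 : ℂ) / ((ω k : ℂ) + (E : ℂ) - z) ∂μ‖ := by
  have hωpos : ∀ k, 0 < ω k := fun k => lt_of_lt_of_le hm (hωm k)
  set c : X → ℂ := fun k => (ω k : ℂ) + (E : ℂ) - z with hc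
  have hcim : ∀ k, (c k).im = -z.im := by intro k; simp [hc]
  have hcre : ∀ k, (c k).re = ω k + E - z.re := by intro k; simp [hc]
  have hyabs : 0 < |z.im| := abs_pos.mpr hz
  have hnc : ∀ k, |z.im| ≤ ‖c k‖ := by
    intro k
    calc |z.im| = |(c k).im| := by rw [hcim]; rw [abs_neg]
    _ ≤ ‖c k‖ := Complex.abs_im_le_norm _
  have hc0 : ∀ k, c k ≠ 0 := by
    intro k h
    have := hnc k
    rw [h] at this
    simp at this
    exact hz (by linarith [abs_nonneg z.im, this])
  set C := 1 + |z.re| / |z.im| with hC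
  have hC0 : 0 ≤ C := by positivity
  have hωle : ∀ k, ω k ≤ C * ‖c k‖ := by
    intro k
    have h1 : ω k - |z.re| ≤ ‖c k‖ := by
      have h2 : ω k + E - z.re ≤ |(c k).re| := by rw [hcre]; exact le_abs_self _
      have h3 : |(c k).re| ≤ ‖c k‖ := Complex.abs_re_le_norm _
      have h4 : z.re ≤ |z.re| := le_abs_self _
      have : ω k - |z.re| ≤ ω k + E - z.re := by linarith
      calc ω k - |z.re| ≤ |(c k).re| := le_trans this h2
      _ ≤ ‖c k‖ := h3
    have h5 : |z.re| ≤ (|z.re| / |z.im|) * ‖c k‖ := by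
      have := hnc k
      rw [div_mul_eq_mul_div, le_div_iff₀ hyabs]
      nlinarith [abs_nonneg z.re]
    calc ω k ≤ ‖c k‖ + |z.re| := by linarith
    _ ≤ ‖c k‖ + (|z.re| / |z.im|) * ‖c k‖ := by linarith
    _ = C * ‖c k‖ := by ring
  -- the bound function
  have hbint : Integrable (fun k => (ω k)⁻¹ * ‖f k‖ ^ 2) μ :=
    by
      refine ⟨((hω.inv).mul (hf.norm.pow_const 2)).aestronglyMeasurable, ?_⟩
      rw [hasFiniteIntegral_iff_ofReal ?_]
      · have : ∀ k, ENNReal.ofReal ((ω k)⁻¹ * ‖f k‖ ^ 2)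
            = ENNReal.ofReal (ω k ^ (-1 : ℝ) * ‖f k‖ ^ 2) := by
          intro k; rw [Real.rpow_neg_one]
        simp_rw [this]
        exact lt_top_iff_ne_top.mpr hf1
      · exact Filter.Eventually.of_forall fun k =>
          mul_nonneg (inv_nonneg.mpr (hωpos k).le) (sq_nonneg _)
  have hgmeas : AEStronglyMeasurable
      (fun k => (‖f k‖ ^ 2 : ℂ) / c k) μ := by
    apply Measurable.aestronglyMeasurable
    apply Measurable.div
    · exact (Complex.measurable_ofReal.comp hf.norm).pow_const 2
    · exact ((Complex.measurable_ofReal.comp hω).add_const (E : ℂ)).sub_const z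
  have hgbound : ∀ k, ‖(‖f k‖ ^ 2 : ℂ) / c k‖ ≤ C * ((ω k)⁻¹ * ‖f k‖ ^ 2) := by
    intro k
    rw [norm_div]
    have hn : ‖(‖f k‖ ^ 2 : ℂ)‖ = ‖f k‖ ^ 2 := by
      rw [norm_pow, Complex.norm_real, norm_norm]
    rw [hn]
    rw [div_le_iff₀ (norm_pos_iff.mpr (hc0 k))]
    have := hωle k
    have hω0 := hωpos k
    have hcpos : 0 < ‖c k‖ := norm_pos_iff.mpr (hc0 k)
    have hfn : 0 ≤ ‖f k‖ ^ 2 := by positivity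
    calc ‖f k‖ ^ 2 = ((ω k)⁻¹ * ‖f k‖ ^ 2) * ω k := by field_simp
    _ ≤ ((ω k)⁻¹ * ‖f k‖ ^ 2) * (C * ‖c k‖) := by
        apply mul_le_mul_of_nonneg_left this (by positivity)
    _ = C * ((ω k)⁻¹ * ‖f k‖ ^ 2) * ‖c k‖ := by ring
  have hgint : Integrable (fun k => (‖f k‖ ^ 2 : ℂ) / c k) μ := by
    refine Integrable.mono' (hbint.const_mul C) hgmeas ?_
    exact Filter.Eventually.of_forall hgbound
  refine ⟨hgint, ?_⟩
  set I := ∫ k, (‖f k‖ ^ 2 : ℂ) / c k ∂μ with hI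
  have hIim : z.im * I.im = ∫ k, z.im * ((‖f k‖ ^ 2 : ℂ) / c k).im ∂μ := by
    have h1 := integral_im (𝕜 := ℂ) hgint
    simp only [RCLike.im_to_complex] at h1
    rw [hI, ← h1, ← integral_const_mul]
  have him : 0 ≤ z.im * I.im := by
    rw [hIim]
    apply integral_nonneg
    intro k
    show 0 ≤ z.im * ((‖f k‖ ^ 2 : ℂ) / c k).im
    have hns : 0 < Complex.normSq (c k) := Complex.normSq_pos.mpr (hc0 k)
    have heq : ((‖f k‖ ^ 2 : ℂ) / c k).im = ‖f k‖ ^ 2 * z.im / Complex.normSq (c k) := by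
      rw [Complex.div_im, hcim]
      simp only [← Complex.ofReal_pow, Complex.ofReal_im, Complex.ofReal_re]
      ring
    rw [heq]
    have h2 : z.im * (‖f k‖ ^ 2 * z.im / Complex.normSq (c k))
        = z.im ^ 2 * ‖f k‖ ^ 2 / Complex.normSq (c k) := by ring
    rw [h2]
    positivity
  set w : ℂ := (ωe : ℂ) + (E : ℂ) - z - (lam ^ 2 : ℂ) * I with hw
  have hwim : w.im = -z.im - lam ^ 2 * I.im := by
    simp [hw, Complex.sub_im, Complex.add_im, Complex.mul_im, ← Complex.ofReal_pow]
  have key : |z.im| ≤ |w.im| := by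
    rw [hwim]
    have ht : 0 ≤ z.im * (lam ^ 2 * I.im) := by nlinarith
    have : |(-z.im - lam ^ 2 * I.im)| = |z.im + lam ^ 2 * I.im| := by
      rw [← abs_neg]; ring_nf
    rw [this]
    set t := lam ^ 2 * I.im
    have h2 : z.im ^ 2 ≤ (z.im + t) ^ 2 := by nlinarith
    rw [← Real.sqrt_sq_eq_abs, ← Real.sqrt_sq_eq_abs]
    exact Real.sqrt_le_sqrt h2
  calc |z.im| ≤ |w.im| := key
  _ ≤ ‖w‖ := Complex.abs_im_le_norm w
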